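/- For every n ≥ 1, every symmetric matrix Y ∈ ℝ^{n×n}, and all λ', σ' > 0, the partition function admits the spherical-integral representation Z(Y) = ∫ P(x) exp(−(λ'/(4n))‖x‖⁴) · [∫_{O(n)} exp(½√(λ'/n) Tr(Y U x xᵀ Uᵀ)) dU] dx, where dU is the Haar probability measure on the orthogonal group O(n) and P = N(0,σ'²)^{⊗n}. -/

import Mathlib

open MeasureTheory ProbabilityTheory Filter Matrix

noncomputable section

instance {n : ℕ} : MeasurableSpace (Matrix (Fin n) (Fin n) ℝ) :=
  inferInstanceAs (MeasurableSpace (Fin n → Fin n → ℝ))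

/-- Squared Frobenius norm of a matrix. -/
def frobSq {n : ℕ} (M : Matrix (Fin n) (Fin n) ℝ) : ℝ := ∑ i, ∑ j, (M i j) ^ 2

/-- i.i.d. centered Gaussian prior with variance `v` on `ℝⁿ`. -/
def gaussPrior (n : ℕ) (v : ℝ) : Measure (Fin n → ℝ) :=
  Measure.pi fun _ => gaussianReal 0 (Real.toNNReal v)

/-- Partition function `Z(Y)`. -/
def partitionFn (n : ℕ) (sig' lam' : ℝ) (Y : Matrix (Fin n) (Fin n) ℝ) : ℝ :=
  ∫ x, Real.exp (-(lam' / (4 * n)) * (∑ i, (x i) ^ 2) ^ 2 +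
      (1 / 2) * Real.sqrt (lam' / n) * Matrix.trace (Y * Matrix.vecMulVec x x))
    ∂gaussPrior n (sig' ^ 2)

/-- `μ` is the Haar probability measure on the orthogonal group `O(n)`:
it is a left-invariant probability measure. -/
def IsHaarProb (n : ℕ) (μ : Measure (Matrix.orthogonalGroup (Fin n) ℝ)) : Prop :=
  IsProbabilityMeasure μ ∧
    ∀ V : Matrix.orthogonalGroup (Fin n) ℝ, μ.map (fun U => V * U) = μ

/-! ### Auxiliary lemmas -/

section Auxiliary

open Real

variable {n : ℕ}

lemma measurable_gaussianPDF' (v : NNReal) : Measurable (gaussianPDF 0 v) :=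
  (measurable_gaussianPDFReal 0 v).ennreal_ofReal

lemma lintegral_pi_prod {n : ℕ} (g : Fin n → ℝ → ENNReal) (hg : ∀ i, Measurable (g i)) :
    ∫⁻ x : Fin n → ℝ, ∏ i, g i (x i) ∂(Measure.pi fun _ => (volume : Measure ℝ)) =
      ∏ i, ∫⁻ t, g i t := by
  induction n with
  | zero => simp [Measure.pi_empty_univ]
  | succ n ih =>
    have h := (measurePreserving_piFinSuccAbove (fun _ : Fin (n+1) => (volume : Measure ℝ)) 0).symm
    have hF : Measurable fun x : Fin (n+1) → ℝ => ∏ i, g i (x i) :=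
      Finset.measurable_prod _ fun i _ => (hg i).comp (measurable_pi_apply i)
    rw [← h.lintegral_comp hF]
    simp_rw [MeasurableEquiv.piFinSuccAbove_symm_apply, Fin.insertNthEquiv,
      Fin.prod_univ_succ, Fin.insertNth_zero]
    simp only [Fin.zero_succAbove, Equiv.coe_fn_mk, Fin.cons_zero, Fin.cons_succ, cast_eq]
    rw [lintegral_prod_mul (μ := (volume : Measure ℝ))
      (ν := Measure.pi fun _ : Fin n => (volume : Measure ℝ))
      (f := g 0) (g := fun y : Fin n → ℝ => ∏ i, g i.succ (y i))
      (hg 0).aemeasurable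
      (Finset.measurable_prod _ fun i _ => (hg i.succ).comp (measurable_pi_apply i)).aemeasurable]
    rw [ih (fun i => g i.succ) (fun i => hg i.succ)]

lemma gaussPrior_withDensity {n : ℕ} {v : NNReal} (hv : v ≠ 0) :
    (Measure.pi fun _ : Fin n => gaussianReal 0 v) =
      (volume : Measure (Fin n → ℝ)).withDensity (fun x => ∏ i, gaussianPDF 0 v (x i)) := by
  apply Measure.pi_eq
  intro s hs
  rw [withDensity_apply _ (MeasurableSet.univ_pi hs),
    ← lintegral_indicator (MeasurableSet.univ_pi hs)]
  have hind : ∀ x : Fin n → ℝ,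
      (Set.univ.pi s).indicator (fun x => ∏ i, gaussianPDF 0 v (x i)) x
        = ∏ i, (s i).indicator (gaussianPDF 0 v) (x i) := by
    intro x
    by_cases hx : x ∈ Set.univ.pi s
    · rw [Set.indicator_of_mem hx]
      exact Finset.prod_congr rfl fun i _ =>
        (Set.indicator_of_mem (hx i (Set.mem_univ i)) _).symm
    · rw [Set.indicator_of_notMem hx]
      rw [Set.mem_univ_pi] at hx
      push_neg at hx
      obtain ⟨i, hi⟩ := hx
      exact (Finset.prod_eq_zero (Finset.mem_univ i)
        (Set.indicator_of_notMem hi _)).symm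
  simp_rw [hind]
  rw [volume_pi, lintegral_pi_prod _ (fun i => ((measurable_gaussianPDF' v).indicator (hs i)))]
  exact Finset.prod_congr rfl fun i _ => by
    rw [lintegral_indicator (hs i), ← gaussianReal_apply 0 hv (s i)]

lemma measurable_mulVec' (M : Matrix (Fin n) (Fin n) ℝ) :
    Measurable fun x : Fin n → ℝ => M.mulVec x := by
  refine measurable_pi_lambda _ fun i => ?_
  simp only [Matrix.mulVec, dotProduct]
  exact Finset.measurable_sum _ fun j _ => (measurable_pi_apply j).const_mul _

lemma orth_transpose_mul (U : Matrix.orthogonalGroup (Fin n) ℝ) :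
    (U : Matrix (Fin n) (Fin n) ℝ)ᵀ * (U : Matrix (Fin n) (Fin n) ℝ) = 1 := by
  have hstar : star (U : Matrix (Fin n) (Fin n) ℝ) = (U : Matrix (Fin n) (Fin n) ℝ)ᵀ := by
    ext i j; simp [Matrix.star_apply]
  have h := (Unitary.mem_iff.mp U.2).1
  rwa [hstar] at h

lemma orth_abs_det (U : Matrix.orthogonalGroup (Fin n) ℝ) :
    |(U : Matrix (Fin n) (Fin n) ℝ).det| = 1 := by
  have h := congrArg Matrix.det (orth_transpose_mul U)
  rw [Matrix.det_mul, Matrix.det_transpose, Matrix.det_one] at h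
  rcases mul_self_eq_one_iff.mp h with h1 | h1 <;> simp [h1]

lemma volume_map_mulVec (U : Matrix.orthogonalGroup (Fin n) ℝ) :
    Measure.map (fun x : Fin n → ℝ => (U : Matrix (Fin n) (Fin n) ℝ).mulVec x) volume
      = volume := by
  have hdet : (U : Matrix (Fin n) (Fin n) ℝ).det ≠ 0 := by
    intro h; simpa [h] using orth_abs_det U
  have h := Real.map_matrix_volume_pi_eq_smul_volume_pi hdet
  have hco : (fun x : Fin n → ℝ => (U : Matrix (Fin n) (Fin n) ℝ).mulVec x)
      = ⇑(Matrix.toLin' (U : Matrix (Fin n) (Fin n) ℝ)) := by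
    funext x; rw [Matrix.toLin'_apply]
  rw [hco, h, abs_inv, orth_abs_det U]
  simp

lemma sum_sq_mulVec (U : Matrix.orthogonalGroup (Fin n) ℝ) (x : Fin n → ℝ) :
    ∑ i, ((U : Matrix (Fin n) (Fin n) ℝ).mulVec x i) ^ 2 = ∑ i, (x i) ^ 2 := by
  have hd : ∀ y : Fin n → ℝ, ∑ i, (y i) ^ 2 = y ⬝ᵥ y := fun y => by
    simp [dotProduct, sq]
  rw [hd, hd]
  rw [dotProduct_mulVec, ← Matrix.mulVec_transpose, Matrix.mulVec_mulVec,
    orth_transpose_mul U, Matrix.one_mulVec]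

lemma vecMulVec_mulVec_conj (M : Matrix (Fin n) (Fin n) ℝ) (x : Fin n → ℝ) :
    Matrix.vecMulVec (M.mulVec x) (M.mulVec x) = M * Matrix.vecMulVec x x * Mᵀ := by
  ext i j
  simp only [Matrix.vecMulVec_apply, Matrix.mul_apply, Matrix.transpose_apply,
    Matrix.mulVec, dotProduct]
  rw [Finset.sum_mul_sum]
  rw [Finset.sum_comm]
  refine Finset.sum_congr rfl fun k _ => ?_
  rw [Finset.sum_mul]
  refine Finset.sum_congr rfl fun l _ => ?_
  ring

lemma prod_gaussianPDFReal (v : NNReal) (y : Fin n → ℝ) :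
    ∏ i, gaussianPDFReal 0 v (y i)
      = (Real.sqrt (2 * π * v))⁻¹ ^ n * Real.exp (-(∑ i, (y i) ^ 2) / (2 * v)) := by
  simp only [gaussianPDFReal, sub_zero]
  rw [Finset.prod_mul_distrib, Finset.prod_const, Finset.card_univ, Fintype.card_fin,
    ← Real.exp_sum]
  congr 1
  simp [neg_div, Finset.sum_div]

lemma prod_gaussianPDF_comp (v : NNReal) {y z : Fin n → ℝ}
    (h : ∑ i, (y i) ^ 2 = ∑ i, (z i) ^ 2) :
    ∏ i, gaussianPDF 0 v (y i) = ∏ i, gaussianPDF 0 v (z i) := by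
  simp only [gaussianPDF]
  rw [← ENNReal.ofReal_prod_of_nonneg fun i _ => gaussianPDFReal_nonneg 0 v (y i),
    ← ENNReal.ofReal_prod_of_nonneg fun i _ => gaussianPDFReal_nonneg 0 v (z i),
    prod_gaussianPDFReal, prod_gaussianPDFReal, h]

lemma gaussPrior_map (U : Matrix.orthogonalGroup (Fin n) ℝ) {v : NNReal} (hv : v ≠ 0) :
    Measure.map (fun x : Fin n → ℝ => (U : Matrix (Fin n) (Fin n) ℝ).mulVec x)
        (Measure.pi fun _ : Fin n => gaussianReal 0 v)
      = Measure.pi fun _ : Fin n => gaussianReal 0 v := by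
  set T : (Fin n → ℝ) → (Fin n → ℝ) := fun x => (U : Matrix (Fin n) (Fin n) ℝ).mulVec x
  set G : (Fin n → ℝ) → ENNReal := fun x => ∏ i, gaussianPDF 0 v (x i) with hG
  have hGmeas : Measurable G :=
    Finset.measurable_prod _ fun i _ =>
      (measurable_gaussianPDF' v).comp (measurable_pi_apply i)
  have hGT : ∀ x, G (T x) = G x := fun x =>
    prod_gaussianPDF_comp v (sum_sq_mulVec U x)
  rw [gaussPrior_withDensity hv]
  refine Measure.ext fun s hs => ?_
  rw [Measure.map_apply (measurable_mulVec' _) hs,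
    withDensity_apply _ ((measurable_mulVec' _) hs),
    withDensity_apply _ hs,
    ← lintegral_indicator ((measurable_mulVec' ((U : Matrix (Fin n) (Fin n) ℝ))) hs),
    ← lintegral_indicator hs]
  have hpt : ∀ x, (T ⁻¹' s).indicator G x = s.indicator G (T x) := by
    intro x
    classical
    rw [Set.indicator_apply, Set.indicator_apply, Set.mem_preimage]
    split_ifs with h
    · exact (hGT x).symm
    · rfl
  refine (lintegral_congr hpt).trans ?_
  rw [← lintegral_map (hGmeas.indicator hs) (measurable_mulVec' _), volume_map_mulVec U]

lemma trace_mul_vecMulVec (Y : Matrix (Fin n) (Fin n) ℝ) (w : Fin n → ℝ) :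
    Matrix.trace (Y * Matrix.vecMulVec w w) = ∑ i, ∑ j, Y i j * (w j * w i) := by
  simp [Matrix.trace, Matrix.diag, Matrix.mul_apply, Matrix.vecMulVec_apply]

end Auxiliary

set_option maxHeartbeats 1000000 in
set_option synthInstance.maxHeartbeats 200000 in
/-- Spherical-integral representation of the partition function:
`Z(Y) = ∫ P(x) e^{−(λ'/(4n))‖x‖⁴} ∫_{O(n)} e^{½√(λ'/n) Tr(Y U x xᵀ Uᵀ)} dU dx`. -/
theorem partition_spherical_representation (n : ℕ) (hn : 1 ≤ n)
    (sig' lam' : ℝ) (hsig' : 0 < sig') (hlam' : 0 < lam')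
    (Y : Matrix (Fin n) (Fin n) ℝ) (hY : Y.IsSymm)
    (μ : Measure (Matrix.orthogonalGroup (Fin n) ℝ)) (hμ : IsHaarProb n μ) :
    partitionFn n sig' lam' Y =
      ∫ x, Real.exp (-(lam' / (4 * n)) * (∑ i, (x i) ^ 2) ^ 2) *
          (∫ U, Real.exp ((1 / 2) * Real.sqrt (lam' / n) *
              Matrix.trace (Y * ((U : Matrix (Fin n) (Fin n) ℝ) *
                Matrix.vecMulVec x x * (U : Matrix (Fin n) (Fin n) ℝ)ᵀ)) ) ∂μ)
        ∂gaussPrior n (sig' ^ 2) := by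
  classical
  haveI hμp : IsProbabilityMeasure μ := hμ.1
  haveI hPp : IsProbabilityMeasure (gaussPrior n (sig' ^ 2)) := by
    unfold gaussPrior; infer_instance
  have hv : Real.toNNReal (sig' ^ 2) ≠ 0 := by
    simp only [ne_eq, Real.toNNReal_eq_zero, not_le]
    positivity
  set P : Measure (Fin n → ℝ) := gaussPrior n (sig' ^ 2) with hP
  have hnpos : (0 : ℝ) < n := by exact_mod_cast Nat.lt_of_lt_of_le Nat.zero_lt_one hn
  set a : ℝ := lam' / (4 * n) with ha
  have hapos : 0 < a := by positivity
  set c : ℝ := (1 / 2) * Real.sqrt (lam' / n) with hc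
  have hcpos : 0 ≤ c := by positivity
  set CY : ℝ := ∑ i, ∑ j, |Y i j| with hCY
  have hCYpos : 0 ≤ CY := Finset.sum_nonneg fun i _ =>
    Finset.sum_nonneg fun j _ => abs_nonneg _
  -- the integrand of the partition function
  set g : (Fin n → ℝ) → ℝ := fun y =>
    Real.exp (-(lam' / (4 * n)) * (∑ i, (y i) ^ 2) ^ 2 +
      c * Matrix.trace (Y * Matrix.vecMulVec y y)) with hg
  have hgmeas : Measurable g := by
    apply Measurable.exp
    apply Measurable.add
    · exact ((Finset.measurable_sum _ fun i _ =>
        (measurable_pi_apply i).pow_const 2).pow_const 2).const_mul _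
    · apply Measurable.const_mul
      simp_rw [trace_mul_vecMulVec]
      exact Finset.measurable_sum _ fun i _ => Finset.measurable_sum _ fun j _ =>
        (((measurable_pi_apply j).mul (measurable_pi_apply i))).const_mul _
  -- full two-variable integrand
  set F : (Fin n → ℝ) × (Matrix.orthogonalGroup (Fin n) ℝ) → ℝ := fun p =>
    Real.exp (-(lam' / (4 * n)) * (∑ i, (p.1 i) ^ 2) ^ 2 +
      c * Matrix.trace (Y * ((p.2 : Matrix (Fin n) (Fin n) ℝ) *
        Matrix.vecMulVec p.1 p.1 * (p.2 : Matrix (Fin n) (Fin n) ℝ)ᵀ))) with hF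
  -- rewrite F via mulVec
  have hFg : ∀ p : (Fin n → ℝ) × (Matrix.orthogonalGroup (Fin n) ℝ),
      F p = g ((p.2 : Matrix (Fin n) (Fin n) ℝ).mulVec p.1) := by
    intro p
    rw [hF, hg]
    simp only
    rw [← vecMulVec_mulVec_conj, sum_sq_mulVec]
  have hFmeas : Measurable F := by
    have hw : ∀ i : Fin n, Measurable fun p :
        (Fin n → ℝ) × (Matrix.orthogonalGroup (Fin n) ℝ) =>
        (p.2 : Matrix (Fin n) (Fin n) ℝ).mulVec p.1 i := by
      intro i
      simp only [Matrix.mulVec, dotProduct]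
      refine Finset.measurable_sum _ fun j _ => Measurable.mul ?_ ?_
      · exact (measurable_pi_apply j).comp ((measurable_pi_apply i).comp
          (measurable_subtype_coe.comp measurable_snd))
      · exact (measurable_pi_apply j).comp measurable_fst
    have : Measurable fun p : (Fin n → ℝ) × (Matrix.orthogonalGroup (Fin n) ℝ) =>
        (p.2 : Matrix (Fin n) (Fin n) ℝ).mulVec p.1 :=
      measurable_pi_lambda _ hw
    simp only [funext hFg]
    exact hgmeas.comp this
  -- uniform bound
  have hbound : ∀ p : (Fin n → ℝ) × (Matrix.orthogonalGroup (Fin n) ℝ),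
      |F p| ≤ Real.exp ((c * CY) ^ 2 / (4 * a)) := by
    intro p
    rw [hFg p]
    set w : Fin n → ℝ := (p.2 : Matrix (Fin n) (Fin n) ℝ).mulVec p.1 with hw
    set t : ℝ := ∑ i, (w i) ^ 2 with ht
    have htnn : 0 ≤ t := Finset.sum_nonneg fun i _ => sq_nonneg _
    have hwsq : ∀ i, (w i) ^ 2 ≤ t := fun i =>
      Finset.single_le_sum (f := fun i => (w i) ^ 2)
        (fun j _ => sq_nonneg _) (Finset.mem_univ i)
    have htr : |Matrix.trace (Y * Matrix.vecMulVec w w)| ≤ CY * t := by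
      rw [trace_mul_vecMulVec]
      calc |∑ i, ∑ j, Y i j * (w j * w i)|
          ≤ ∑ i, |∑ j, Y i j * (w j * w i)| := Finset.abs_sum_le_sum_abs _ _
        _ ≤ ∑ i, ∑ j, |Y i j * (w j * w i)| :=
            Finset.sum_le_sum fun i _ => Finset.abs_sum_le_sum_abs _ _
        _ ≤ ∑ i, ∑ j, |Y i j| * t := by
            refine Finset.sum_le_sum fun i _ => Finset.sum_le_sum fun j _ => ?_
            rw [abs_mul]
            refine mul_le_mul_of_nonneg_left ?_ (abs_nonneg _)
            have h1 := hwsq j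
            have h2 := hwsq i
            nlinarith [sq_nonneg (|w j| - |w i|), sq_abs (w j), sq_abs (w i),
              abs_mul (w j) (w i), abs_nonneg (w j), abs_nonneg (w i)]
        _ = CY * t := by rw [hCY, Finset.sum_mul]; simp [Finset.sum_mul]
    simp only [hg]
    rw [Real.abs_exp, Real.exp_le_exp, ← ht]
    have h2 : c * Matrix.trace (Y * Matrix.vecMulVec w w) ≤ c * (CY * t) :=
      mul_le_mul_of_nonneg_left (le_trans (le_abs_self _) htr) hcpos
    have h3 : -(lam' / (4 * ↑n)) * t ^ 2 + c * Matrix.trace (Y * Matrix.vecMulVec w w)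
        ≤ -a * t ^ 2 + c * (CY * t) := by
      rw [show lam' / (4 * (n : ℝ)) = a from rfl]; linarith
    refine le_trans h3 ?_
    have hK : (c * CY) ^ 2 = 4 * a * ((c * CY) ^ 2 / (4 * a)) := by field_simp
    nlinarith [sq_nonneg (2 * a * t - c * CY), hapos, htnn, hK]
  -- integrability on the product
  have hFint : Integrable F (P.prod μ) := by
    refine Integrable.mono' (integrable_const (Real.exp ((c * CY) ^ 2 / (4 * a))))
      hFmeas.aestronglyMeasurable (ae_of_all _ hbound)
  -- for each U the inner integral is the partition function
  have step3 : ∀ U : Matrix.orthogonalGroup (Fin n) ℝ,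
      ∫ x, F (x, U) ∂P = partitionFn n sig' lam' Y := by
    intro U
    have hcomp : ∀ x, F (x, U) = g ((U : Matrix (Fin n) (Fin n) ℝ).mulVec x) :=
      fun x => hFg (x, U)
    simp_rw [hcomp]
    have hmap : Measure.map (fun x : Fin n → ℝ =>
        (U : Matrix (Fin n) (Fin n) ℝ).mulVec x) P = P := by
      rw [hP]
      exact gaussPrior_map U hv
    have := integral_map (μ := P)
      (φ := fun x : Fin n → ℝ => (U : Matrix (Fin n) (Fin n) ℝ).mulVec x)
      (measurable_mulVec' _).aemeasurable
      (show AEStronglyMeasurable g (Measure.map (fun x : Fin n → ℝ =>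
        (U : Matrix (Fin n) (Fin n) ℝ).mulVec x) P) by
        rw [hmap]; exact hgmeas.aestronglyMeasurable)
    rw [← this, hmap]
    rfl
  -- main chain
  symm
  calc _ = ∫ x, ∫ U, F (x, U) ∂μ ∂P := by
        refine integral_congr_ae (ae_of_all _ fun x => ?_)
        dsimp only
        rw [← integral_const_mul]
        refine integral_congr_ae (ae_of_all _ fun U => ?_)
        dsimp only
        rw [← Real.exp_add]
    _ = ∫ U, ∫ x, F (x, U) ∂P ∂μ :=
        integral_integral_swap (f := fun x U => F (x, U)) hFint
    _ = ∫ U, partitionFn n sig' lam' Y ∂μ :=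
        integral_congr_ae (ae_of_all _ step3)
    _ = partitionFn n sig' lam' Y := by
        rw [integral_const, probReal_univ]
        simp

end
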